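/- arXiv:0811.1521 — 2 statements merged into one kernel-verified Lean document; each statement's English description precedes it below -/
import Mathlib

section
/- Let (A_n)_{n∈ℕ} be a decreasing sequence of nonempty, internal, sharply bounded subsets of R̃^d, and for each n let (A_{n,ε})_ε be a sharply bounded representative of A_n. Let (u_ε)_{ε∈(0,1)} be a net of maps ℝ^d → ℂ. Then the net (u_ε(x_ε))_ε is moderate for every representative (x_ε)_ε of every point of ⋂_{n∈ℕ} A_n if and only if there exists N ∈ ℕ such that sup_{x ∈ A_{N,ε} + ε^N} |u_ε(x)| ≤ ε^{-N} for all sufficiently small ε, where A + r denotes {x ∈ ℝ^d : d(x,A) ≤ r}. -/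
open Real Set Metric MeasureTheory Filter

noncomputable section

/-- `P ε` holds for all sufficiently small `ε ∈ (0,1)`. -/
def EvSmall (P : ℝ → Prop) : Prop :=
  ∃ ε₀ : ℝ, 0 < ε₀ ∧ ε₀ < 1 ∧ ∀ ε : ℝ, 0 < ε → ε ≤ ε₀ → P ε

/-- A net `(u_ε)` with values in a seminormed group is moderate. -/
def Moderate {E : Type*} [SeminormedAddGroup E] (u : ℝ → E) : Prop :=
  ∃ N : ℕ, EvSmall fun ε => ‖u ε‖ ≤ ε ^ (-(N : ℝ))

/-- A net `(u_ε)` is negligible. -/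
def Negligible {E : Type*} [SeminormedAddGroup E] (u : ℝ → E) : Prop :=
  ∀ m : ℕ, EvSmall fun ε => ‖u ε‖ ≤ ε ^ (m : ℝ)

/-- Two nets represent the same generalized point. -/
def EqvNet {E : Type*} [SeminormedAddGroup E] (x y : ℝ → E) : Prop :=
  Negligible fun ε => x ε - y ε

/-- The set of generalized points of `Ẽ` (modelled as the moderate nets). -/
def GenPt (E : Type*) [SeminormedAddGroup E] : Set (ℝ → E) := {x | Moderate x}

/-- `x` is a representative of some generalized point belonging to `A`. -/
def IsReprOfPointOf {E : Type*} [SeminormedAddGroup E] (A : Set (ℝ → E)) (x : ℝ → E) : Prop :=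
  Moderate x ∧ ∃ a ∈ A, EqvNet x a

/-- The sharp norm `e^{-v(x)}` of a (moderate) net. -/
noncomputable def sharpNorm {E : Type*} [SeminormedAddGroup E] (x : ℝ → E) : ℝ :=
  sInf {r : ℝ | ∃ b : ℝ, r = Real.exp (-b) ∧ EvSmall fun ε => ‖x ε‖ ≤ ε ^ b}

/-- `A` is open for the sharp topology (as a set of generalized points). -/
def SharpOpen {E : Type*} [SeminormedAddGroup E] (A : Set (ℝ → E)) : Prop :=
  (∀ x ∈ A, Moderate x) ∧
  ∀ x ∈ A, ∃ r > 0, ∀ y : ℝ → E, Moderate y →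
    sharpNorm (fun ε => y ε - x ε) < r → y ∈ A

/-- `B` is a sharp neighbourhood of `A`. -/
def IsSharpNbhdOf {E : Type*} [SeminormedAddGroup E] (B A : Set (ℝ → E)) : Prop :=
  A ⊆ B ∧ ∀ x ∈ A, ∃ r > 0, ∀ y : ℝ → E, Moderate y →
    sharpNorm (fun ε => y ε - x ε) < r → y ∈ B

/-- The internal set with representative `(Aε)`. -/
def InternalSet {E : Type*} [SeminormedAddGroup E] (Aε : ℝ → Set E) : Set (ℝ → E) :=
  {x | Moderate x ∧ ∃ y : ℝ → E, EqvNet x y ∧ EvSmall fun ε => y ε ∈ Aε ε}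

/-- `(Aε)` is a sharply bounded representative. -/
def SharplyBddRep {E : Type*} [SeminormedAddGroup E] (Aε : ℝ → Set E) : Prop :=
  ∃ M : ℕ, EvSmall fun ε => ∀ x ∈ Aε ε, ‖x‖ ≤ ε ^ (-(M : ℝ))

/-- A set of generalized points is sharply bounded. -/
def SharplyBddSet {E : Type*} [SeminormedAddGroup E] (A : Set (ℝ → E)) : Prop :=
  ∃ C : ℝ, ∀ x ∈ A, sharpNorm x ≤ C

/-- The interleaved closure of a set of generalized points. -/
def interleaved {E : Type*} [SeminormedAddGroup E] (A : Set (ℝ → E)) : Set (ℝ → E) :=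
  {x | ∃ (m : ℕ) (S : Fin m → Set ℝ) (y : Fin m → ℝ → E),
    (∀ ε ∈ Set.Ioo (0:ℝ) 1, ∃! j, ε ∈ S j) ∧ (∀ j, y j ∈ A) ∧
    ∀ ε ∈ Set.Ioo (0:ℝ) 1, ∀ j, ε ∈ S j → x ε = y j ε}

/-- A net of smooth functions (smooth for each ε ∈ (0,1)). -/
def SmoothNet {V : Type*} [NormedAddCommGroup V] [NormedSpace ℝ V] (u : ℝ → V → ℂ) : Prop :=
  ∀ ε : ℝ, 0 < ε → ε < 1 → ContDiff ℝ (⊤ : ℕ∞) (u ε)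

/-- The nets belonging to `E_M(A)` : all derivatives are moderate along the points of `A`. -/
def EMod {V : Type*} [NormedAddCommGroup V] [NormedSpace ℝ V]
    (A : Set (ℝ → V)) (u : ℝ → V → ℂ) : Prop :=
  SmoothNet u ∧ ∀ (n : ℕ) (x : ℝ → V), IsReprOfPointOf A x →
    Moderate fun ε => iteratedFDeriv ℝ n (u ε) (x ε)

/-- The nets belonging to `N(A)` : all derivatives are negligible along the points of `A`. -/
def NNeg {V : Type*} [NormedAddCommGroup V] [NormedSpace ℝ V]
    (A : Set (ℝ → V)) (u : ℝ → V → ℂ) : Prop :=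
  SmoothNet u ∧ ∀ (n : ℕ) (x : ℝ → V), IsReprOfPointOf A x →
    Negligible fun ε => iteratedFDeriv ℝ n (u ε) (x ε)

/-- `u` and `v` define the same element of `G̃(A)`. -/
def GEq {V : Type*} [NormedAddCommGroup V] [NormedSpace ℝ V]
    (A : Set (ℝ → V)) (u v : ℝ → V → ℂ) : Prop :=
  NNeg A fun ε z => u ε z - v ε z

/-- `x̃ ≤ ỹ` in `R̃` (for the given representatives). -/
def RleNet (x y : ℝ → ℝ) : Prop := ∀ m : ℕ, EvSmall fun ε => x ε ≤ y ε + ε ^ (m : ℝ)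

/-- `x̃ ≫ 0` in `R̃`. -/
def StrPosNet (x : ℝ → ℝ) : Prop := ∃ m : ℕ, EvSmall fun ε => ε ^ (m : ℝ) ≤ x ε

/-- `x̃ ≪ ỹ` in `R̃`. -/
def RltlNet (x y : ℝ → ℝ) : Prop := StrPosNet fun ε => y ε - x ε

/-- The operator `∂̄ = ½(∂ₓ + i ∂_y)` on smooth functions `ℂ → ℂ`. -/
def dbar (u : ℂ → ℂ) (z : ℂ) : ℂ :=
  (fderiv ℝ u z 1 + Complex.I * fderiv ℝ u z Complex.I) / 2

/-- The iterated derivative `D^k u = ∂ₓ^k u`. -/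
def Dpow : ℕ → (ℂ → ℂ) → ℂ → ℂ
  | 0, u => u
  | (k+1), u => Dpow k fun z => fderiv ℝ u z 1

/-- `u ∈ G̃_H(A)` : generalized holomorphic functions on `A ⊆ C̃`. -/
def GHol (A : Set (ℝ → ℂ)) (u : ℝ → ℂ → ℂ) : Prop :=
  EMod A u ∧ NNeg A fun ε => dbar (u ε)

/-- A continuous, piecewise `C¹` function on `[0,1]` (with its partition). -/
structure PwC1Path where
  toFun : ℝ → ℂ
  n : ℕ
  pt : Fin (n + 1) → ℝ
  mono : Monotone pt
  first : pt 0 = 0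
  last : pt (Fin.last n) = 1
  cont : ContinuousOn toFun (Set.Icc 0 1)
  piece : ∀ i : Fin n, ContDiffOn ℝ 1 toFun (Set.Icc (pt i.castSucc) (pt i.succ))

/-- A net of piecewise `C¹` paths which is moderate for the `C¹_pw` norm. -/
def PathModerate (γ : ℝ → PwC1Path) : Prop :=
  (∃ N : ℕ, EvSmall fun ε => ∀ t ∈ Set.Icc (0:ℝ) 1, ‖(γ ε).toFun t‖ ≤ ε ^ (-(N:ℝ))) ∧
  (∃ N : ℕ, EvSmall fun ε => ∀ᵐ t ∂(volume.restrict (Set.Icc (0:ℝ) 1)),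
      ‖deriv (γ ε).toFun t‖ ≤ ε ^ (-(N:ℝ)))

/-- Two nets of paths represent the same generalized path
(their difference is negligible for the `C¹_pw` norm). -/
def PathEqv (γ γ' : ℝ → PwC1Path) : Prop :=
  ∀ m : ℕ, EvSmall fun ε =>
    (∀ t ∈ Set.Icc (0:ℝ) 1, ‖(γ ε).toFun t - (γ' ε).toFun t‖ ≤ ε ^ (m:ℝ)) ∧
    (∀ᵐ t ∂(volume.restrict (Set.Icc (0:ℝ) 1)),
      ‖deriv (γ ε).toFun t - deriv (γ' ε).toFun t‖ ≤ ε ^ (m:ℝ))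

/-- `γ` is a (generalized) path in `A ⊆ C̃`. -/
def PathIn (A : Set (ℝ → ℂ)) (γ : ℝ → PwC1Path) : Prop :=
  PathModerate γ ∧ ∀ t : ℝ → ℝ, (∀ ε, t ε ∈ Set.Icc (0:ℝ) 1) →
    IsReprOfPointOf A fun ε => (γ ε).toFun (t ε)

/-- The complex path integral `∫_γ u(z) dz` along a piecewise `C¹` path. -/
noncomputable def pathIntegral (γ : PwC1Path) (u : ℂ → ℂ) : ℂ :=
  ∑ i : Fin γ.n, ∫ t in (γ.pt i.castSucc)..(γ.pt i.succ),
    u (γ.toFun t) * derivWithin γ.toFun (Set.Icc (γ.pt i.castSucc) (γ.pt i.succ)) t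

/-- The path is closed: `γ(0) = γ(1)` as generalized points. -/
def ClosedPath (γ : ℝ → PwC1Path) : Prop :=
  Negligible fun ε => (γ ε).toFun 1 - (γ ε).toFun 0

/-- A continuous, piecewise `C¹` function on `[0,1]²` (with its grid partition). -/
structure PwC1Homotopy where
  toFun : ℝ × ℝ → ℂ
  n : ℕ
  pt : Fin (n + 1) → ℝ
  mono : Monotone pt
  first : pt 0 = 0
  last : pt (Fin.last n) = 1
  cont : ContinuousOn toFun (Set.Icc 0 1 ×ˢ Set.Icc 0 1)
  piece : ∀ i j : Fin n, ContDiffOn ℝ 1 toFun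
    (Set.Icc (pt i.castSucc) (pt i.succ) ×ˢ Set.Icc (pt j.castSucc) (pt j.succ))

/-- A moderate net of piecewise `C¹` functions on the square. -/
def HomotopyModerate (H : ℝ → PwC1Homotopy) : Prop :=
  (∃ N : ℕ, EvSmall fun ε => ∀ p ∈ (Set.Icc (0:ℝ) 1 ×ˢ Set.Icc (0:ℝ) 1),
      ‖(H ε).toFun p‖ ≤ ε ^ (-(N:ℝ))) ∧
  (∃ N : ℕ, EvSmall fun ε =>
      ∀ᵐ p ∂(volume.restrict ((Set.Icc (0:ℝ) 1 ×ˢ Set.Icc (0:ℝ) 1) : Set (ℝ × ℝ))),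
      ‖fderiv ℝ (H ε).toFun p‖ ≤ ε ^ (-(N:ℝ)))

/-- `H` is a homotopy in `A` between the closed paths `γ` and `γ'`. -/
def IsHomotopyBetween (A : Set (ℝ → ℂ)) (γ γ' : ℝ → PwC1Path)
    (H : ℝ → PwC1Homotopy) : Prop :=
  HomotopyModerate H ∧
  (∀ t : ℝ → ℝ, (∀ ε, t ε ∈ Set.Icc (0:ℝ) 1) →
    (Negligible fun ε => (H ε).toFun (t ε, 0) - (γ ε).toFun (t ε)) ∧
    (Negligible fun ε => (H ε).toFun (t ε, 1) - (γ' ε).toFun (t ε))) ∧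
  (∀ s : ℝ → ℝ, (∀ ε, s ε ∈ Set.Icc (0:ℝ) 1) →
    Negligible fun ε => (H ε).toFun (0, s ε) - (H ε).toFun (1, s ε)) ∧
  (∀ t s : ℝ → ℝ, (∀ ε, t ε ∈ Set.Icc (0:ℝ) 1) → (∀ ε, s ε ∈ Set.Icc (0:ℝ) 1) →
    IsReprOfPointOf A fun ε => (H ε).toFun (t ε, s ε))

/- ### Auxiliary lemmas -/

theorem EvSmall.mono {P Q : ℝ → Prop} (h : EvSmall P)
    (h2 : ∀ ε, 0 < ε → ε < 1 → P ε → Q ε) : EvSmall Q := by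
  obtain ⟨e, he, he1, hP⟩ := h
  exact ⟨e, he, he1, fun ε hε hεe => h2 ε hε (lt_of_le_of_lt hεe he1) (hP ε hε hεe)⟩

theorem EvSmall.and {P Q : ℝ → Prop} (h : EvSmall P) (h' : EvSmall Q) :
    EvSmall fun ε => P ε ∧ Q ε := by
  obtain ⟨e, he, he1, hP⟩ := h
  obtain ⟨e', he', he1', hQ⟩ := h'
  exact ⟨min e e', lt_min he he', lt_of_le_of_lt (min_le_left _ _) he1,
    fun ε hε hεe => ⟨hP ε hε (hεe.trans (min_le_left _ _)),
      hQ ε hε (hεe.trans (min_le_right _ _))⟩⟩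

theorem evSmall_of_forall {P : ℝ → Prop} (h : ∀ ε : ℝ, 0 < ε → ε < 1 → P ε) : EvSmall P :=
  ⟨1/2, by norm_num, by norm_num, fun ε hε hεe => h ε hε (by linarith)⟩

theorem evSmall_le_half : EvSmall fun ε : ℝ => ε ≤ 1/2 :=
  ⟨1/2, by norm_num, by norm_num, fun ε hε hεe => hεe⟩

theorem not_evSmall {P : ℝ → Prop} (h : ¬ EvSmall P) :
    ∀ δ : ℝ, 0 < δ → ∃ ε, 0 < ε ∧ ε ≤ δ ∧ ε < 1 ∧ ¬ P ε := by
  intro δ hδ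
  by_contra hc
  push_neg at hc
  exact h ⟨min δ (1/2), lt_min hδ (by norm_num),
    lt_of_le_of_lt (min_le_right _ _) (by norm_num), fun ε hε hεe =>
      hc ε hε (hεe.trans (min_le_left _ _))
        (lt_of_le_of_lt (hεe.trans (min_le_right _ _)) (by norm_num))⟩

theorem evSmall_all {P : ℕ → ℝ → Prop} :
    ∀ N : ℕ, (∀ n ≤ N, EvSmall (P n)) → EvSmall fun ε => ∀ n ≤ N, P n ε := by
  intro N
  induction N with
  | zero => intro h
            exact (h 0 le_rfl).mono fun ε _ _ hp n hn => by
              rw [Nat.le_zero.mp hn]; exact hp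
  | succ N ih =>
      intro h
      refine ((ih fun n hn => h n (hn.trans (Nat.le_succ N))).and (h (N+1) le_rfl)).mono
        fun ε _ _ hp n hn => ?_
      rcases Nat.le_succ_iff.mp hn with h' | h'
      · exact hp.1 n h'
      · rw [h']; exact hp.2

theorem rpow_nat_mono {ε : ℝ} (hε : 0 < ε) (hε1 : ε ≤ 1) {m k : ℕ} (h : k ≤ m) :
    ε ^ (m:ℝ) ≤ ε ^ (k:ℝ) :=
  Real.rpow_le_rpow_of_exponent_ge hε hε1 (by exact_mod_cast h)

theorem one_le_rpow_neg {ε : ℝ} (hε : 0 < ε) (hε1 : ε ≤ 1) (N : ℕ) : (1:ℝ) ≤ ε ^ (-(N:ℝ)) :=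
  Real.one_le_rpow_of_pos_of_le_one_of_nonpos hε hε1 (neg_nonpos.mpr (Nat.cast_nonneg N))

theorem exists_near_of_mem_cthickening {E : Type*} [NormedAddCommGroup E] {s : Set E} {x : E}
    {δ : ℝ} (hδ : 0 < δ) (hx : x ∈ Metric.cthickening δ s) : ∃ a ∈ s, dist x a ≤ 2*δ := by
  have h1 : EMetric.infEdist x s < ENNReal.ofReal (2*δ) :=
    lt_of_le_of_lt hx (by rw [ENNReal.ofReal_lt_ofReal_iff (by linarith)]; linarith)
  obtain ⟨a, ha, hd⟩ := EMetric.infEdist_lt_iff.mp h1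
  exact ⟨a, ha, le_of_lt (edist_lt_ofReal.mp hd)⟩

theorem EqvNet.symm' {E : Type*} [SeminormedAddGroup E] {x y : ℝ → E} (h : EqvNet x y) :
    EqvNet y x := fun m => (h m).mono fun ε _ _ hx => by
  show ‖y ε - x ε‖ ≤ ε ^ (m:ℝ); rw [norm_sub_rev]; exact hx

theorem EqvNet.refl' {E : Type*} [SeminormedAddGroup E] (x : ℝ → E) : EqvNet x x :=
  fun m => evSmall_of_forall fun ε hε hε1 => by
    show ‖x ε - x ε‖ ≤ ε ^ (m:ℝ)
    simp only [sub_self, norm_zero]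
    positivity

theorem EqvNet.trans' {E : Type*} [SeminormedAddGroup E] {x y z : ℝ → E}
    (h : EqvNet x y) (h' : EqvNet y z) : EqvNet x z := by
  intro m
  refine (((h (m+1)).and (h' (m+1))).and evSmall_le_half).mono fun ε hε hε1 hx => ?_
  have tri : ‖x ε - z ε‖ ≤ ‖x ε - y ε‖ + ‖y ε - z ε‖ := by
    simpa using norm_sub_le_norm_sub_add_norm_sub (x ε) (y ε) (z ε)
  have h2 : ε ^ ((m:ℝ)+1) = ε ^ (m:ℝ) * ε := by
    rw [Real.rpow_add hε, Real.rpow_one]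
  have h3 : ((m+1:ℕ):ℝ) = (m:ℝ)+1 := by push_cast; ring
  have hm : (0:ℝ) < ε ^ (m:ℝ) := Real.rpow_pos_of_pos hε _
  calc ‖x ε - z ε‖ ≤ ‖x ε - y ε‖ + ‖y ε - z ε‖ := tri
    _ ≤ ε ^ ((m+1:ℕ):ℝ) + ε ^ ((m+1:ℕ):ℝ) := add_le_add hx.1.1 hx.1.2
    _ = 2 * (ε ^ (m:ℝ) * ε) := by rw [h3, h2]; ring
    _ ≤ ε ^ (m:ℝ) := by nlinarith [hx.2, hm]

theorem mem_internal_of_rep {E : Type*} [SeminormedAddGroup E] {Aε : ℝ → Set E} {x : ℝ → E}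
    (hm : Moderate x) (h : EvSmall fun ε => x ε ∈ Aε ε) : x ∈ InternalSet Aε :=
  ⟨hm, x, EqvNet.refl' x, h⟩

theorem internal_nonempty_ev {E : Type*} [SeminormedAddGroup E] {Aε : ℝ → Set E}
    (h : (InternalSet Aε).Nonempty) : EvSmall fun ε => (Aε ε).Nonempty := by
  obtain ⟨x, _, y, _, hy⟩ := h
  exact hy.mono fun ε _ _ hyε => ⟨y ε, hyε⟩

theorem internal_subset_thickening {E : Type*} [NormedAddCommGroup E] {Aε Bε : ℝ → Set E}
    (hbd : SharplyBddRep Aε) (hne : (InternalSet Aε).Nonempty)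
    (hsub : InternalSet Aε ⊆ InternalSet Bε) (m : ℕ) :
    EvSmall fun ε => ∀ c ∈ Aε ε, c ∈ Metric.cthickening (ε ^ (m:ℝ)) (Bε ε) := by
  classical
  obtain ⟨x0, hx0mod, y0, hx0y0, hy0⟩ := hne
  set z : ℝ → E := fun ε =>
    if h : ∃ c, c ∈ Aε ε ∧ c ∉ Metric.cthickening (ε ^ (m:ℝ)) (Bε ε) then h.choose else y0 ε
    with hzdef
  have hzA : EvSmall fun ε => z ε ∈ Aε ε := hy0.mono fun ε _ _ hy => by
    by_cases h : ∃ c, c ∈ Aε ε ∧ c ∉ Metric.cthickening (ε ^ (m:ℝ)) (Bε ε)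
    · show z ε ∈ Aε ε; rw [hzdef]; simp only; rw [dif_pos h]; exact h.choose_spec.1
    · show z ε ∈ Aε ε; rw [hzdef]; simp only; rw [dif_neg h]; exact hy
  have hzmod : Moderate z := by
    obtain ⟨M, hM⟩ := hbd
    exact ⟨M, (hM.and hzA).mono fun ε _ _ h => h.1 _ h.2⟩
  obtain ⟨_, w, hzw, hwB⟩ := hsub (mem_internal_of_rep hzmod hzA)
  refine ((hzw (m+1)).and hwB).mono fun ε hε hε1 h c hc => ?_
  by_contra hcth
  have hbad : ∃ c, c ∈ Aε ε ∧ c ∉ Metric.cthickening (ε ^ (m:ℝ)) (Bε ε) := ⟨c, hc, hcth⟩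
  have hzeq : z ε = hbad.choose := by rw [hzdef]; simp only; rw [dif_pos hbad]
  have hmem : z ε ∈ Metric.cthickening (ε ^ (m:ℝ)) (Bε ε) := by
    refine Metric.mem_cthickening_of_dist_le _ _ _ _ h.2 ?_
    calc dist (z ε) (w ε) = ‖z ε - w ε‖ := dist_eq_norm _ _
      _ ≤ ε ^ ((m+1:ℕ):ℝ) := h.1
      _ ≤ ε ^ (m:ℝ) := rpow_nat_mono hε hε1.le (Nat.le_succ m)
  exact hbad.choose_spec.2 (hzeq ▸ hmem)

theorem seq_choice {Q : ℕ → ℝ → Prop}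
    (h : ∀ N : ℕ, ∀ δ : ℝ, 0 < δ → ∃ e, 0 < e ∧ e ≤ δ ∧ Q N e) :
    ∃ f : ℕ → ℝ, (∀ N, 0 < f N) ∧ (∀ N, Q N (f N)) ∧ ∀ N, f (N+1) ≤ f N / 2 := by
  choose F h1 h2 h3 using h
  let g : ℕ → {x : ℝ // 0 < x} := fun N => Nat.rec
    ⟨F 0 1 one_pos, h1 0 1 one_pos⟩
    (fun n p => ⟨F (n+1) (p.1/2) (half_pos p.2), h1 (n+1) (p.1/2) (half_pos p.2)⟩) N
  refine ⟨fun N => (g N).1, fun N => (g N).2, ?_, ?_⟩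
  · intro N
    cases N with
    | zero => exact h3 0 1 one_pos
    | succ n => exact h3 (n+1) ((g n).1/2) (half_pos (g n).2)
  · intro N
    exact h2 (N+1) ((g N).1/2) (half_pos (g N).2)

/-- Lemma 3.3 (uniform moderateness on a decreasing intersection of internal sets). -/
theorem moderate_uniform_on_intersection (d : ℕ)
    (A : ℕ → Set (ℝ → EuclideanSpace ℝ (Fin d)))
    (Aε : ℕ → ℝ → Set (EuclideanSpace ℝ (Fin d)))
    (hA : ∀ n, A n = InternalSet (Aε n))
    (hne : ∀ n, (A n).Nonempty)
    (hdec : ∀ n, A (n + 1) ⊆ A n)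
    (hbd : ∀ n, SharplyBddRep (Aε n))
    (u : ℝ → EuclideanSpace ℝ (Fin d) → ℂ) :
    (∀ x : ℝ → EuclideanSpace ℝ (Fin d), IsReprOfPointOf (⋂ n, A n) x →
        Moderate fun ε => u ε (x ε)) ↔
      ∃ N : ℕ, EvSmall fun ε =>
        ∀ x ∈ Metric.cthickening (ε ^ (N : ℝ)) (Aε N ε), ‖u ε x‖ ≤ ε ^ (-(N : ℝ)) := by
  classical
  constructor
  · -- hard direction
    intro hLHS
    by_contra hR
    push_neg at hR
    -- chain of inclusions
    have hchain : ∀ n N : ℕ, n ≤ N → A N ⊆ A n := by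
      intro n N h
      induction h with
      | refl => exact subset_rfl
      | @step m h' ih => exact (hdec m).trans ih
    obtain ⟨M₀, hM₀⟩ := hbd 0
    have hneI : ∀ n, (InternalSet (Aε n)).Nonempty := fun n => by
      rw [← hA n]; exact hne n
    -- combined eventual property at level N
    have hG : ∀ N : ℕ, EvSmall fun ε =>
        (∀ n ≤ N, (∀ c ∈ Aε N ε, c ∈ Metric.cthickening (ε ^ (N:ℝ)) (Aε n ε)) ∧
          (Aε n ε).Nonempty) ∧ (∀ c ∈ Aε 0 ε, ‖c‖ ≤ ε ^ (-(M₀:ℝ))) := by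
      intro N
      refine (evSmall_all N fun n hn => ?_).and hM₀
      refine (internal_subset_thickening (hbd N) (hneI N) ?_ N).and
        (internal_nonempty_ev (hneI n))
      rw [← hA N, ← hA n]; exact hchain n N hn
    choose η hη1 hη2 hη3 using hG
    -- choose the bad scales
    have hstep : ∀ N : ℕ, ∀ δ : ℝ, 0 < δ → ∃ e, 0 < e ∧ e ≤ δ ∧
        (e ≤ η N ∧ ∃ c ∈ Metric.cthickening (e ^ (N:ℝ)) (Aε N e),
          ¬‖u e c‖ ≤ e ^ (-(N:ℝ))) := by
      intro N δ hδ
      obtain ⟨e, he, hed, he1, hbadP⟩ := not_evSmall (hR N) (min δ (η N)) (lt_min hδ (hη1 N))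
      push_neg at hbadP
      obtain ⟨c, hc, hcv⟩ := hbadP
      exact ⟨e, he, hed.trans (min_le_left _ _),
        hed.trans (min_le_right _ _), c, hc, not_le.mpr hcv⟩
    obtain ⟨f, hfpos, hfQ, hfstep⟩ := seq_choice hstep
    have hfη : ∀ N, f N ≤ η N := fun N => (hfQ N).1
    choose bad hbadmem hbadval using fun N => (hfQ N).2
    have hanti : StrictAnti f := strictAnti_nat_of_succ_lt fun N =>
      lt_of_le_of_lt (hfstep N) (half_lt_self (hfpos N))
    have hf1 : ∀ N, f N < 1 := fun N => lt_of_le_of_lt (hfη N) (hη2 N)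
    have hpow : ∀ N, f N ≤ f 0 / 2^N := by
      intro N
      induction N with
      | zero => simp
      | succ k ih =>
          calc f (k+1) ≤ f k / 2 := hfstep k
            _ ≤ (f 0 / 2^k)/2 := by linarith
            _ = f 0 / 2^(k+1) := by ring
    have htend : ∀ r : ℝ, 0 < r → ∃ N, f N < r := by
      intro r hr
      obtain ⟨N, hN⟩ := pow_unbounded_of_one_lt (f 0 / r) (one_lt_two (α := ℝ))
      refine ⟨N, lt_of_le_of_lt (hpow N) ?_⟩
      have h2N : (0:ℝ) < 2^N := by positivity
      rw [div_lt_iff₀ h2N]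
      have := (div_lt_iff₀ hr).mp hN
      nlinarith
    have hex : ∀ ε : ℝ, 0 < ε → ∃ N, f (N+1) < ε := fun ε hε =>
      let ⟨N, hN⟩ := htend ε hε
      ⟨N, lt_of_le_of_lt (hanti.antitone (Nat.le_succ N)) hN⟩
    -- the level function
    set L : ℝ → ℕ := fun ε => if h : 0 < ε then Nat.find (hex ε h) else 0 with hLdef
    have hLval : ∀ ε (hε : 0 < ε), L ε = Nat.find (hex ε hε) := by
      intro ε hε; rw [hLdef]; simp only; rw [dif_pos hε]
    have hL1 : ∀ ε, 0 < ε → ε ≤ f 0 → ε ≤ f (L ε) := by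
      intro ε hε hεf0
      rcases Nat.eq_zero_or_pos (L ε) with h0 | hposL
      · rw [h0]; exact hεf0
      · obtain ⟨k, hk⟩ := Nat.exists_eq_succ_of_ne_zero (Nat.pos_iff_ne_zero.mp hposL)
        have hkL : k < Nat.find (hex ε hε) := by rw [← hLval ε hε, hk]; omega
        have hmin := Nat.find_min (hex ε hε) hkL
        rw [hk]; exact le_of_not_gt hmin
    have hL2 : ∀ ε (hε : 0 < ε) (K : ℕ), ε ≤ f K → K ≤ L ε := by
      intro ε hε K hεK
      by_contra h'
      push_neg at h'
      have hspec := Nat.find_spec (hex ε hε)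
      rw [← hLval ε hε] at hspec
      have : f K ≤ f (L ε + 1) := hanti.antitone (by omega)
      linarith
    have hL3 : ∀ N, L (f N) = N := by
      intro N
      rw [hLval (f N) (hfpos N), Nat.find_eq_iff]
      exact ⟨hanti (Nat.lt_succ_self N),
        fun k hk => not_lt.mpr (hanti.antitone (by omega))⟩
    -- the interleaved net
    set x : ℝ → EuclideanSpace ℝ (Fin d) := fun ε =>
      if h : 0 < ε ∧ ε ≤ f 0 then
        (if h2 : ∃ N, ε = f N then bad h2.choose
         else if h3 : (Aε (L ε) ε).Nonempty then h3.choose else 0)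
      else 0 with hxdef
    -- main approximation claim
    have claimA : ∀ ε, 0 < ε → ε ≤ f 0 →
        ∃ a ∈ Aε (L ε) ε, dist (x ε) a ≤ 2 * ε ^ (L ε : ℝ) := by
      intro ε hε hεf0
      have hεfL : ε ≤ f (L ε) := hL1 ε hε hεf0
      have hGL := hη3 (L ε) ε hε (hεfL.trans (hfη (L ε)))
      have hx01 : 0 < ε ∧ ε ≤ f 0 := ⟨hε, hεf0⟩
      by_cases h2 : ∃ K, ε = f K
      · have hchoose : ε = f h2.choose := h2.choose_spec
        have hLc : L ε = h2.choose := (congrArg L hchoose).trans (hL3 h2.choose)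
        have hxval : x ε = bad h2.choose := by
          rw [hxdef]; simp only; rw [dif_pos hx01, dif_pos h2]
        have hmem := hbadmem h2.choose
        rw [← hchoose] at hmem
        obtain ⟨a, ha, hda⟩ := exists_near_of_mem_cthickening
          (Real.rpow_pos_of_pos hε _) hmem
        rw [hLc, hxval]
        exact ⟨a, ha, hda⟩
      · have hne3 : (Aε (L ε) ε).Nonempty := (hGL.1 (L ε) le_rfl).2
        have hxval : x ε = hne3.choose := by
          rw [hxdef]; simp only; rw [dif_pos hx01, dif_neg h2, dif_pos hne3]
        refine ⟨hne3.choose, hne3.choose_spec, ?_⟩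
        rw [hxval, dist_self]
        positivity
    -- moderateness of x
    have hxmod : Moderate x := by
      refine ⟨M₀+1, min (f 0) (1/5), lt_min (hfpos 0) (by norm_num),
        lt_of_le_of_lt (min_le_right _ _) (by norm_num), fun ε hε hεe => ?_⟩
      have hεf0 : ε ≤ f 0 := hεe.trans (min_le_left _ _)
      have hε5 : ε ≤ 1/5 := hεe.trans (min_le_right _ _)
      have hε1 : ε < 1 := by linarith
      obtain ⟨a, ha, hda⟩ := claimA ε hε hεf0
      have hεfL : ε ≤ f (L ε) := hL1 ε hε hεf0
      have hGL := hη3 (L ε) ε hε (hεfL.trans (hfη (L ε)))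
      have hath := (hGL.1 0 (Nat.zero_le _)).1 a ha
      obtain ⟨b, hb, hdb⟩ := exists_near_of_mem_cthickening
        (Real.rpow_pos_of_pos hε _) hath
      have hbN := hGL.2 b hb
      have hpow1 : ε ^ (L ε : ℝ) ≤ 1 :=
        Real.rpow_le_one hε.le hε1.le (Nat.cast_nonneg _)
      have htri : ‖x ε‖ ≤ ‖b‖ + (dist b a + dist a (x ε)) := by
        calc ‖x ε‖ ≤ ‖b‖ + ‖b - x ε‖ := norm_le_norm_add_norm_sub _ _
          _ = ‖b‖ + dist b (x ε) := by rw [dist_eq_norm]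
          _ ≤ ‖b‖ + (dist b a + dist a (x ε)) := by
              linarith [dist_triangle b a (x ε)]
      have hd1 : dist a (x ε) ≤ 2 * ε ^ (L ε : ℝ) := by rw [dist_comm]; exact hda
      have hd2 : dist b a ≤ 2 * ε ^ (L ε : ℝ) := by rw [dist_comm]; exact hdb
      have hle : ‖x ε‖ ≤ ε ^ (-(M₀:ℝ)) + 4 := by linarith
      have h1M : (1:ℝ) ≤ ε ^ (-(M₀:ℝ)) := one_le_rpow_neg hε hε1.le M₀
      have hkey : ε ^ (-((M₀+1:ℕ):ℝ)) = ε ^ (-(M₀:ℝ)) * ε⁻¹ := by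
        rw [← Real.rpow_neg_one ε, ← Real.rpow_add hε]
        congr 1
        push_cast
        ring
      have hεinv : ε * ε⁻¹ = 1 := mul_inv_cancel₀ (ne_of_gt hε)
      have hinvpos : 0 < ε⁻¹ := inv_pos.mpr hε
      have hinv : (5:ℝ) ≤ ε⁻¹ := by nlinarith
      have hMpos : 0 < ε ^ (-(M₀:ℝ)) := Real.rpow_pos_of_pos hε _
      calc ‖x ε‖ ≤ ε ^ (-(M₀:ℝ)) + 4 := hle
        _ ≤ 5 * ε ^ (-(M₀:ℝ)) := by linarith
        _ ≤ ε ^ (-(M₀:ℝ)) * ε⁻¹ := by nlinarith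
        _ = ε ^ (-((M₀+1:ℕ):ℝ)) := hkey.symm
    -- x belongs to every A n
    have hxAn : ∀ n : ℕ, x ∈ InternalSet (Aε n) := by
      intro n
      set y : ℝ → EuclideanSpace ℝ (Fin d) := fun ε =>
        if h : ∃ c, c ∈ Aε n ε ∧ dist (x ε) c ≤ 4 * ε ^ (L ε : ℝ) then h.choose
        else if h2 : (Aε n ε).Nonempty then h2.choose else 0 with hydef
      refine ⟨hxmod, y, ?_, ?_⟩
      · -- EqvNet x y
        intro m
        refine ⟨min (f (max n m + 1)) (1/4), lt_min (hfpos _) (by norm_num),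
          lt_of_le_of_lt (min_le_right _ _) (by norm_num), fun ε hε hεe => ?_⟩
        have hεf : ε ≤ f (max n m + 1) := hεe.trans (min_le_left _ _)
        have hε4 : ε ≤ 1/4 := hεe.trans (min_le_right _ _)
        have hε1 : ε < 1 := by linarith
        have hεf0 : ε ≤ f 0 := hεf.trans (hanti.antitone (Nat.zero_le _))
        have hNlb : max n m + 1 ≤ L ε := hL2 ε hε _ hεf
        have hεfL : ε ≤ f (L ε) := hL1 ε hε hεf0
        have hGL := hη3 (L ε) ε hε (hεfL.trans (hfη (L ε)))
        obtain ⟨a, ha, hda⟩ := claimA ε hε hεf0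
        have hnle : n ≤ L ε := le_trans (le_trans (le_max_left n m) (Nat.le_succ _)) hNlb
        have hath := (hGL.1 n hnle).1 a ha
        obtain ⟨c, hc, hdc⟩ := exists_near_of_mem_cthickening
          (Real.rpow_pos_of_pos hε _) hath
        have hcond : ∃ c', c' ∈ Aε n ε ∧ dist (x ε) c' ≤ 4 * ε ^ (L ε : ℝ) := by
          refine ⟨c, hc, ?_⟩
          calc dist (x ε) c ≤ dist (x ε) a + dist a c := dist_triangle _ _ _
            _ ≤ 2 * ε ^ (L ε : ℝ) + 2 * ε ^ (L ε : ℝ) := add_le_add hda hdc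
            _ = 4 * ε ^ (L ε : ℝ) := by ring
        have hyval : y ε = hcond.choose := by
          rw [hydef]; simp only; rw [dif_pos hcond]
        have hdxy : dist (x ε) (y ε) ≤ 4 * ε ^ (L ε : ℝ) := by
          rw [hyval]; exact hcond.choose_spec.2
        show ‖x ε - y ε‖ ≤ ε ^ (m:ℝ)
        rw [← dist_eq_norm]
        have hm1 : ε ^ (L ε : ℝ) ≤ ε ^ ((m+1:ℕ):ℝ) :=
          rpow_nat_mono hε hε1.le (le_trans (by omega) hNlb)
        have hsplit : ε ^ ((m+1:ℕ):ℝ) = ε ^ (m:ℝ) * ε := by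
          rw [show ((m+1:ℕ):ℝ) = (m:ℝ)+1 by push_cast; ring, Real.rpow_add hε,
            Real.rpow_one]
        have hppos : 0 < ε ^ (m:ℝ) := Real.rpow_pos_of_pos hε _
        calc dist (x ε) (y ε) ≤ 4 * ε ^ (L ε : ℝ) := hdxy
          _ ≤ 4 * (ε ^ (m:ℝ) * ε) := by
              rw [← hsplit]; exact mul_le_mul_of_nonneg_left hm1 (by norm_num)
          _ ≤ ε ^ (m:ℝ) := by nlinarith
      · -- y ε ∈ Aε n ε eventually
        refine ⟨min (f 0) (η n), lt_min (hfpos 0) (hη1 n),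
          lt_of_le_of_lt (min_le_right _ _) (hη2 n), fun ε hε hεe => ?_⟩
        have hGn := hη3 n ε hε (hεe.trans (min_le_right _ _))
        have hne2 : (Aε n ε).Nonempty := (hGn.1 n le_rfl).2
        show y ε ∈ Aε n ε
        rw [hydef]; simp only
        by_cases h : ∃ c, c ∈ Aε n ε ∧ dist (x ε) c ≤ 4 * ε ^ (L ε : ℝ)
        · rw [dif_pos h]; exact h.choose_spec.1
        · rw [dif_neg h, dif_pos hne2]; exact hne2.choose_spec
    -- contradiction with moderateness of u along x
    have hrep : IsReprOfPointOf (⋂ k, A k) x :=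
      ⟨hxmod, x, Set.mem_iInter.mpr fun k => by rw [hA k]; exact hxAn k, EqvNet.refl' x⟩
    obtain ⟨K, εK, hεKpos, hεK1, hK⟩ := hLHS x hrep
    obtain ⟨N₀, hN₀⟩ := htend εK hεKpos
    set N := max K N₀ with hNdef
    have hfNεK : f N ≤ εK :=
      le_of_lt (lt_of_le_of_lt (hanti.antitone (le_max_right K N₀)) hN₀)
    have hh : 0 < f N ∧ f N ≤ f 0 := ⟨hfpos N, hanti.antitone (Nat.zero_le N)⟩
    have h2 : ∃ K', f N = f K' := ⟨N, rfl⟩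
    have hc2 : h2.choose = N := hanti.injective h2.choose_spec.symm
    have hxval : x (f N) = bad N := by
      rw [hxdef]; simp only; rw [dif_pos hh, dif_pos h2, hc2]
    have hub := hK (f N) (hfpos N) hfNεK
    simp only at hub
    rw [hxval] at hub
    have hfN1 : f N ≤ 1 := (hf1 N).le
    have hmono : (f N) ^ (-(K:ℝ)) ≤ (f N) ^ (-(N:ℝ)) := by
      apply Real.rpow_le_rpow_of_exponent_ge (hfpos N) hfN1
      have : (K:ℝ) ≤ (N:ℝ) := by exact_mod_cast le_max_left K N₀
      linarith
    exact hbadval N (hub.trans hmono)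
  · -- easy direction
    rintro ⟨N, hN⟩ x ⟨hxmod, a, haI, hxa⟩
    have haN : a ∈ A N := Set.mem_iInter.mp haI N
    rw [hA N] at haN
    obtain ⟨hamod, y, hay, hyA⟩ := haN
    have hxy : EqvNet x y := hxa.trans' hay
    refine ⟨N, ((hN.and (hxy N)).and hyA).mono fun ε hε hε1 h => ?_⟩
    apply h.1.1
    refine Metric.mem_cthickening_of_dist_le _ _ _ _ h.2 ?_
    rw [dist_eq_norm]
    exact h.1.2


end
end

section
/- Let ∅ ≠ A ⊆ R̃^d be internal and sharply bounded, let (A_ε)_ε be a sharply bounded representative of A, and let u = [(u_ε)_ε] ∈ G̃(A). Then u ∈ G̃^∞(A) if and only if there exists N ∈ ℕ such that for every multi-index α, sup_{x ∈ A_ε} |∂^α u_ε(x)| ≤ ε^{-N} for all sufficiently small ε. -/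
open Real Set Metric MeasureTheory Filter

noncomputable section

/-- `u ∈ G̃^∞(A)` : at each point of `A` all derivatives are bounded by a single power `ρ^{-N}`. -/
def GInfty {V : Type*} [NormedAddCommGroup V] [NormedSpace ℝ V]
    (A : Set (ℝ → V)) (u : ℝ → V → ℂ) : Prop :=
  ∀ x : ℝ → V, IsReprOfPointOf A x → ∃ N : ℕ, ∀ n : ℕ,
    RleNet (fun ε => ‖iteratedFDeriv ℝ n (u ε) (x ε)‖) (fun ε => ε ^ (-(N : ℝ)))

namespace GIaux


theorem evsmall_and {P Q : ℝ → Prop} (hP : EvSmall P) (hQ : EvSmall Q) :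
    EvSmall fun ε => P ε ∧ Q ε := by
  obtain ⟨a, ha0, ha1, hA⟩ := hP
  obtain ⟨b, hb0, hb1, hB⟩ := hQ
  exact ⟨min a b, lt_min ha0 hb0, lt_of_le_of_lt (min_le_left _ _) ha1,
    fun ε hε hε' => ⟨hA ε hε (hε'.trans (min_le_left _ _)),
      hB ε hε (hε'.trans (min_le_right _ _))⟩⟩

theorem evsmall_mono {P Q : ℝ → Prop} (h : ∀ ε, 0 < ε → ε < 1 → P ε → Q ε)
    (hP : EvSmall P) : EvSmall Q := by
  obtain ⟨a, ha0, ha1, hA⟩ := hP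
  exact ⟨a, ha0, ha1, fun ε hε hε' => h ε hε (lt_of_le_of_lt hε' ha1) (hA ε hε hε')⟩

theorem evsmall_half : EvSmall fun ε => ε ≤ 1/2 :=
  ⟨1/2, by norm_num, by norm_num, fun ε _ h => h⟩

theorem rpow_neg_nat {ε : ℝ} (hε : 0 < ε) (N : ℕ) : ε ^ (-(N : ℝ)) = (ε ^ N)⁻¹ := by
  rw [Real.rpow_neg hε.le, Real.rpow_natCast]

theorem rpow_nat {ε : ℝ} (hε : 0 < ε) (N : ℕ) : ε ^ ((N : ℕ) : ℝ) = ε ^ N := by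
  rw [Real.rpow_natCast]

theorem neg_add {E : Type*} [SeminormedAddGroup E] {x y : ℝ → E}
    (hx : Negligible x) (hy : Negligible y) : Negligible (fun ε => x ε + y ε) := by
  intro m
  refine evsmall_mono ?_ (evsmall_and (hx (m+1)) (evsmall_and (hy (m+1)) evsmall_half))
  intro ε hε0 hε1 ⟨h1, h2, h3⟩
  have e1 : ε ^ (((m:ℕ)+1 : ℕ) : ℝ) = ε ^ (m+1) := rpow_nat hε0 (m+1)
  have e2 : ε ^ ((m : ℕ) : ℝ) = ε ^ m := rpow_nat hε0 m
  push_cast at h1 h2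
  calc ‖x ε + y ε‖ ≤ ‖x ε‖ + ‖y ε‖ := norm_add_le _ _
    _ ≤ ε ^ ((m:ℝ) + 1) + ε ^ ((m:ℝ) + 1) := add_le_add h1 h2
    _ ≤ ε ^ ((m:ℕ):ℝ) := by
        have : ε ^ ((m:ℝ)+1) = ε ^ m * ε := by
          rw [show ((m:ℝ)+1) = (((m+1:ℕ)):ℝ) by push_cast; ring, rpow_nat hε0, pow_succ]
        rw [this, e2]
        nlinarith [pow_pos hε0 m, pow_nonneg hε0.le m]

theorem eqv_symm {E : Type*} [SeminormedAddGroup E] {x y : ℝ → E}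
    (h : EqvNet x y) : EqvNet y x := by
  intro m
  refine evsmall_mono ?_ (h m)
  intro ε _ _ hh
  simpa only [← norm_neg (y ε - x ε), neg_sub] using hh

theorem eqv_trans {E : Type*} [SeminormedAddGroup E] {x y z : ℝ → E}
    (h1 : EqvNet x y) (h2 : EqvNet y z) : EqvNet x z := by
  have := neg_add h1 h2
  intro m
  refine evsmall_mono ?_ (this m)
  intro ε _ _ hh
  simpa only [sub_add_sub_cancel] using hh

theorem moderate_of_eqv {E : Type*} [SeminormedAddGroup E] {x y : ℝ → E}
    (hx : Moderate x) (h : EqvNet y x) : Moderate y := by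
  obtain ⟨N, hN⟩ := hx
  refine ⟨N + 1, ?_⟩
  refine evsmall_mono ?_ (evsmall_and hN (evsmall_and (h 0) evsmall_half))
  intro ε hε0 hε1 ⟨h1, h2, h3⟩
  rw [rpow_neg_nat hε0] at h1 ⊢
  rw [rpow_nat hε0, pow_zero] at h2
  have hpow : 0 < ε ^ N := pow_pos hε0 N
  have hge1 : 1 ≤ (ε ^ N)⁻¹ := by
    rw [le_inv_comm₀ one_pos hpow]
    simpa using pow_le_one₀ hε0.le hε1.le
  calc ‖y ε‖ = ‖(y ε - x ε) + x ε‖ := by rw [sub_add_cancel]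
    _ ≤ ‖y ε - x ε‖ + ‖x ε‖ := norm_add_le _ _
    _ ≤ 1 + (ε ^ N)⁻¹ := add_le_add h2 h1
    _ ≤ (ε ^ (N+1))⁻¹ := by
        rw [pow_succ, mul_inv]
        have hεinv : 2 ≤ ε⁻¹ := by
          rw [le_inv_comm₀ two_pos hε0]; linarith
        nlinarith

theorem norm_le_max_of_mem_segment {E : Type*} [SeminormedAddCommGroup E] [NormedSpace ℝ E]
    {x y z : E} (h : z ∈ segment ℝ x y) : ‖z‖ ≤ max ‖x‖ ‖y‖ := by
  obtain ⟨a, b, ha, hb, hab, rfl⟩ := h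
  calc ‖a • x + b • y‖ ≤ a * ‖x‖ + b * ‖y‖ := by
        refine (norm_add_le _ _).trans ?_
        rw [norm_smul, norm_smul, Real.norm_of_nonneg ha, Real.norm_of_nonneg hb]
    _ ≤ a * max ‖x‖ ‖y‖ + b * max ‖x‖ ‖y‖ := by
        gcongr
        · exact le_max_left _ _
        · exact le_max_right _ _
    _ = max ‖x‖ ‖y‖ := by rw [← add_mul, hab, one_mul]

theorem norm_sub_right_of_mem_segment {E : Type*} [SeminormedAddCommGroup E] [NormedSpace ℝ E]
    {x y z : E} (h : z ∈ segment ℝ x y) : ‖z - y‖ ≤ ‖x - y‖ := by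
  obtain ⟨a, b, ha, hb, hab, rfl⟩ := h
  have hb1 : b = 1 - a := by linarith
  have key : a • x + b • y - y = a • (x - y) := by
    rw [hb1, sub_smul, one_smul, smul_sub]; abel
  rw [key, norm_smul, Real.norm_of_nonneg ha]
  have ha1 : a ≤ 1 := by linarith
  nlinarith [norm_nonneg (x - y)]



theorem mpr_dir (d : ℕ)
    (A : Set (ℝ → EuclideanSpace ℝ (Fin d)))
    (Aε : ℝ → Set (EuclideanSpace ℝ (Fin d)))
    (hA : A = InternalSet Aε)
    (u : ℝ → EuclideanSpace ℝ (Fin d) → ℂ) (hu : EMod A u)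
    (N : ℕ) (hN : ∀ n : ℕ, EvSmall fun ε =>
      ∀ x ∈ Aε ε, ‖iteratedFDeriv ℝ n (u ε) x‖ ≤ ε ^ (-(N : ℝ))) :
    GInfty A u := by
  classical
  intro x hx
  obtain ⟨hxmod, a, haA, hxa⟩ := hx
  have haI : a ∈ InternalSet Aε := hA ▸ haA
  obtain ⟨hamod, y, hay, hyin⟩ := haI
  have hxy : EqvNet x y := eqv_trans hxa hay
  have hymod : Moderate y := moderate_of_eqv hamod (eqv_symm hay)
  have hsm := hu.1
  refine ⟨N, fun n => ?_⟩
  -- construction of the argmax point z on the segment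
  have key : ∀ ε : ℝ, 0 < ε → ε < 1 → ∃ z ∈ segment ℝ (x ε) (y ε),
      ∀ w ∈ segment ℝ (x ε) (y ε),
        ‖iteratedFDeriv ℝ (n+1) (u ε) w‖ ≤ ‖iteratedFDeriv ℝ (n+1) (u ε) z‖ := by
    intro ε h0 h1
    have hc : IsCompact (segment ℝ (x ε) (y ε)) := by
      rw [segment_eq_image]
      exact isCompact_Icc.image (by fun_prop)
    obtain ⟨z, hz, hmax⟩ := hc.exists_isMaxOn ⟨x ε, left_mem_segment ℝ _ _⟩
      (((hsm ε h0 h1).continuous_iteratedFDeriv (mod_cast le_top)).norm.continuousOn)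
    exact ⟨z, hz, fun w hw => hmax hw⟩
  set z : ℝ → EuclideanSpace ℝ (Fin d) := fun ε =>
    if h : 0 < ε ∧ ε < 1 then (key ε h.1 h.2).choose else x ε with hzdef
  have hzseg : ∀ ε : ℝ, 0 < ε → ε < 1 → z ε ∈ segment ℝ (x ε) (y ε) := by
    intro ε h0 h1
    rw [hzdef]; simp only [dif_pos (And.intro h0 h1)]
    exact (key ε h0 h1).choose_spec.1
  have hzmax : ∀ ε : ℝ, 0 < ε → ε < 1 → ∀ w ∈ segment ℝ (x ε) (y ε),
      ‖iteratedFDeriv ℝ (n+1) (u ε) w‖ ≤ ‖iteratedFDeriv ℝ (n+1) (u ε) (z ε)‖ := by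
    intro ε h0 h1
    rw [hzdef]; simp only [dif_pos (And.intro h0 h1)]
    exact (key ε h0 h1).choose_spec.2
  -- z is moderate
  have hzmod : Moderate z := by
    obtain ⟨N1, hN1⟩ := hxmod
    obtain ⟨N2, hN2⟩ := hymod
    refine ⟨N1 + N2, ?_⟩
    refine evsmall_mono ?_ (evsmall_and hN1 hN2)
    intro ε h0 h1 ⟨hh1, hh2⟩
    have hseg := hzseg ε h0 h1
    have := norm_le_max_of_mem_segment hseg
    rw [rpow_neg_nat h0] at hh1 hh2 ⊢
    have e1 : (ε ^ N1)⁻¹ ≤ (ε ^ (N1+N2))⁻¹ :=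
      inv_anti₀ (pow_pos h0 _) (pow_le_pow_of_le_one h0.le h1.le (by omega))
    have e2 : (ε ^ N2)⁻¹ ≤ (ε ^ (N1+N2))⁻¹ :=
      inv_anti₀ (pow_pos h0 _) (pow_le_pow_of_le_one h0.le h1.le (by omega))
    calc ‖z ε‖ ≤ max ‖x ε‖ ‖y ε‖ := this
      _ ≤ (ε ^ (N1+N2))⁻¹ := max_le (hh1.trans e1) (hh2.trans e2)
  -- z is equivalent to a
  have hzy : EqvNet z y := by
    intro m
    refine evsmall_mono ?_ (hxy m)
    intro ε h0 h1 hh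
    exact (norm_sub_right_of_mem_segment (hzseg ε h0 h1)).trans hh
  have hza : EqvNet z a := eqv_trans hzy (eqv_symm hay)
  have hzrep : IsReprOfPointOf A z := ⟨hzmod, a, haA, hza⟩
  obtain ⟨K, hK⟩ := hu.2 (n+1) z hzrep
  intro m
  refine evsmall_mono ?_ (evsmall_and (hN n) (evsmall_and hyin
    (evsmall_and hK (hxy (m + K)))))
  intro ε h0 h1 ⟨hsup, hyA, hKb, hneg⟩
  -- mean value theorem
  have hdiff : ‖iteratedFDeriv ℝ n (u ε) (x ε) - iteratedFDeriv ℝ n (u ε) (y ε)‖ ≤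
      ‖iteratedFDeriv ℝ (n+1) (u ε) (z ε)‖ * ‖x ε - y ε‖ := by
    refine Convex.norm_image_sub_le_of_norm_fderiv_le (𝕜 := ℝ)
      (fun w _ => ?_) (fun w hw => ?_) (convex_segment _ _)
      (right_mem_segment ℝ _ _) (left_mem_segment ℝ _ _)
    · exact (((hsm ε h0 h1).iteratedFDeriv_right (m := 1) (mod_cast le_top)).differentiable
        one_ne_zero).differentiableAt
    · rw [norm_fderiv_iteratedFDeriv]
      exact hzmax ε h0 h1 w hw
  have hxb : ‖iteratedFDeriv ℝ n (u ε) (x ε)‖ ≤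
      ‖iteratedFDeriv ℝ n (u ε) (y ε)‖ +
      ‖iteratedFDeriv ℝ (n+1) (u ε) (z ε)‖ * ‖x ε - y ε‖ := by
    have := norm_sub_norm_le (iteratedFDeriv ℝ n (u ε) (x ε))
      (iteratedFDeriv ℝ n (u ε) (y ε))
    linarith [le_trans this hdiff]
  have hprod : ‖iteratedFDeriv ℝ (n+1) (u ε) (z ε)‖ * ‖x ε - y ε‖ ≤ ε ^ ((m:ℕ) : ℝ) := by
    calc ‖iteratedFDeriv ℝ (n+1) (u ε) (z ε)‖ * ‖x ε - y ε‖
        ≤ ε ^ (-(K:ℝ)) * ε ^ (((m + K : ℕ)) : ℝ) := by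
          exact mul_le_mul hKb hneg (norm_nonneg _) (Real.rpow_nonneg h0.le _)
      _ = ε ^ ((m:ℕ) : ℝ) := by
          rw [← Real.rpow_add h0]
          congr 1
          push_cast; ring
  calc ‖iteratedFDeriv ℝ n (u ε) (x ε)‖
      ≤ ‖iteratedFDeriv ℝ n (u ε) (y ε)‖ +
        ‖iteratedFDeriv ℝ (n+1) (u ε) (z ε)‖ * ‖x ε - y ε‖ := hxb
    _ ≤ ε ^ (-(N:ℝ)) + ε ^ ((m:ℕ):ℝ) := add_le_add (hsup _ hyA) hprod


theorem mp_dir (d : ℕ)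
    (A : Set (ℝ → EuclideanSpace ℝ (Fin d)))
    (Aε : ℝ → Set (EuclideanSpace ℝ (Fin d)))
    (hA : A = InternalSet Aε) (hne : A.Nonempty)
    (hbd : SharplyBddRep Aε)
    (u : ℝ → EuclideanSpace ℝ (Fin d) → ℂ)
    (hGI : GInfty A u) :
    ∃ N : ℕ, ∀ n : ℕ, EvSmall fun ε =>
      ∀ x ∈ Aε ε, ‖iteratedFDeriv ℝ n (u ε) x‖ ≤ ε ^ (-(N : ℝ)) := by
  classical
  by_contra hcon
  push_neg at hcon
  simp only [EvSmall, not_exists, not_and, not_forall, not_le, exists_prop] at hcon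
  -- hcon : ∀ N, ∃ n, ∀ ε₀, 0 < ε₀ → ε₀ < 1 → ∃ ε, 0 < ε ∧ ε ≤ ε₀ ∧ ∃ pt ∈ Aε ε, ε^{-N} < ‖…‖
  choose nn hbad using hcon
  -- default points of Aε ε
  obtain ⟨a0, ha0⟩ := hne
  have ha0I : a0 ∈ InternalSet Aε := hA ▸ ha0
  obtain ⟨_, y0, _, ⟨ε₁, hε₁0, hε₁1, hy0⟩⟩ := ha0I
  set p : ℝ → EuclideanSpace ℝ (Fin d) := fun ε =>
    if h : (Aε ε).Nonempty then h.choose else 0 with hpdef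
  have hp : ∀ ε : ℝ, 0 < ε → ε ≤ ε₁ → p ε ∈ Aε ε := by
    intro ε h0 h1
    have hne' : (Aε ε).Nonempty := ⟨y0 ε, hy0 ε h0 h1⟩
    rw [hpdef]; simp only [dif_pos hne']
    exact hne'.choose_spec
  -- the recursive construction of the bad sequence
  have step : ∀ (k : ℕ) (δ : ℝ), 0 < δ → δ < 1 →
      ∃ e : ℝ, (0 < e ∧ e ≤ δ / 2) ∧ ∃ pt ∈ Aε e,
        e ^ (-((Nat.unpair k).1 : ℝ)) < ‖iteratedFDeriv ℝ (nn (Nat.unpair k).1) (u e) pt‖ := by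
    intro k δ h0 h1
    obtain ⟨e, he0, he', hpt⟩ := hbad (Nat.unpair k).1 (δ/2) (by positivity) (by linarith)
    exact ⟨e, ⟨he0, he'⟩, hpt⟩
  set δ₀ : ℝ := min ε₁ (1/2) with hδ₀def
  have hδ₀0 : 0 < δ₀ := lt_min hε₁0 (by norm_num)
  have hδ₀1 : δ₀ < 1 := lt_of_le_of_lt (min_le_right _ _) (by norm_num)
  set S : ℕ → {e : ℝ // 0 < e ∧ e < 1} := fun k =>
    Nat.rec ⟨δ₀, hδ₀0, hδ₀1⟩
      (fun k prev => ⟨(step k prev.1 prev.2.1 prev.2.2).choose,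
        (step k prev.1 prev.2.1 prev.2.2).choose_spec.1.1,
        by
          have h2 := (step k prev.1 prev.2.1 prev.2.2).choose_spec.1.2
          have := prev.2.2
          linarith⟩) k with hSdef
  have hstep : ∀ k : ℕ, (S (k+1)).1 ≤ (S k).1 / 2 ∧
      ∃ pt ∈ Aε (S (k+1)).1, (S (k+1)).1 ^ (-((Nat.unpair k).1 : ℝ)) <
        ‖iteratedFDeriv ℝ (nn (Nat.unpair k).1) (u (S (k+1)).1) pt‖ :=
    fun k => ⟨(step k (S k).1 (S k).2.1 (S k).2.2).choose_spec.1.2,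
      (step k (S k).1 (S k).2.1 (S k).2.2).choose_spec.2⟩
  set ee : ℕ → ℝ := fun k => (S (k+1)).1 with heedef
  have hee0 : ∀ k, 0 < ee k := fun k => (S (k+1)).2.1
  have hSanti : StrictAnti (fun k => (S k).1) := by
    refine strictAnti_nat_of_succ_lt (fun k => ?_)
    have := (hstep k).1
    have := (S k).2.1
    linarith
  have heeinj : Function.Injective ee := by
    intro k l h
    have : k + 1 = l + 1 := hSanti.injective h
    omega
  have hSle : ∀ k : ℕ, (S k).1 ≤ (1/2)^k * δ₀ := by
    intro k
    induction k with
    | zero => simp only [pow_zero, one_mul]; exact le_rfl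
    | succ k ih =>
        have := (hstep k).1
        have : (S (k+1)).1 ≤ ((1/2)^k * δ₀)/2 := by linarith
        calc (S (k+1)).1 ≤ ((1/2)^k * δ₀)/2 := this
          _ = (1/2)^(k+1) * δ₀ := by ring
  have heele : ∀ k : ℕ, ee k ≤ (1/2)^(k+2) := by
    intro k
    have h1 := hSle (k+1)
    have h2 : δ₀ ≤ 1/2 := min_le_right _ _
    have h3 : (0:ℝ) < (1/2)^(k+1) := by positivity
    calc ee k ≤ (1/2)^(k+1) * δ₀ := h1
      _ ≤ (1/2)^(k+1) * (1/2) := by nlinarith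
      _ = (1/2)^(k+2) := by ring
  have heeε₁ : ∀ k : ℕ, ee k ≤ ε₁ := by
    intro k
    have h1 := hSle (k+1)
    have h2 : δ₀ ≤ ε₁ := min_le_left _ _
    have h3 : ((1:ℝ)/2)^(k+1) ≤ 1 := pow_le_one₀ (by norm_num) (by norm_num)
    nlinarith [hδ₀0]
  -- the bad points
  have hbadpt : ∀ k : ℕ, ∃ pt ∈ Aε (ee k),
      (ee k) ^ (-((Nat.unpair k).1 : ℝ)) <
        ‖iteratedFDeriv ℝ (nn (Nat.unpair k).1) (u (ee k)) pt‖ := fun k => (hstep k).2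
  set bp : ℕ → EuclideanSpace ℝ (Fin d) := fun k => (hbadpt k).choose with hbpdef
  have hbp : ∀ k : ℕ, bp k ∈ Aε (ee k) ∧
      (ee k) ^ (-((Nat.unpair k).1 : ℝ)) <
        ‖iteratedFDeriv ℝ (nn (Nat.unpair k).1) (u (ee k)) (bp k)‖ := by
    intro k
    obtain ⟨h1, h2⟩ := (hbadpt k).choose_spec
    exact ⟨h1, h2⟩
  -- the diagonal net
  set x : ℝ → EuclideanSpace ℝ (Fin d) := fun ε =>
    if h : ∃ k, ee k = ε then bp h.choose else p ε with hxdef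
  have hxee : ∀ k : ℕ, x (ee k) = bp k := by
    intro k
    have h : ∃ k', ee k' = ee k := ⟨k, rfl⟩
    rw [hxdef]; simp only [dif_pos h]
    congr 1
    exact heeinj h.choose_spec
  have hxA : ∀ ε : ℝ, 0 < ε → ε ≤ ε₁ → x ε ∈ Aε ε := by
    intro ε h0 h1
    rw [hxdef]
    by_cases h : ∃ k, ee k = ε
    · simp only [dif_pos h]
      have := (hbp h.choose).1
      rwa [h.choose_spec] at this
    · simp only [dif_neg h]
      exact hp ε h0 h1
  have hxmod : Moderate x := by
    obtain ⟨M, hM⟩ := hbd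
    refine ⟨M, ?_⟩
    refine evsmall_mono ?_ (evsmall_and hM
      ⟨min ε₁ (1/2), lt_min hε₁0 (by norm_num),
        lt_of_le_of_lt (min_le_right _ _) (by norm_num), fun ε h0 h1 => h1⟩)
    intro ε h0 h1 ⟨hMb, hsm⟩
    exact hMb _ (hxA ε h0 (le_trans hsm (min_le_left _ _)))
  have hxrep : IsReprOfPointOf A x := by
    refine ⟨hxmod, x, ?_, ?_⟩
    · rw [hA]
      refine ⟨hxmod, x, ?_, ⟨min ε₁ (1/2), lt_min hε₁0 (by norm_num),
          lt_of_le_of_lt (min_le_right _ _) (by norm_num),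
          fun ε h0 h1 => hxA ε h0 (le_trans h1 (min_le_left _ _))⟩⟩
      intro m
      exact ⟨1/2, by norm_num, by norm_num, fun ε h0 _ => by
        simp only [sub_self, norm_zero]; positivity⟩
    · intro m
      exact ⟨1/2, by norm_num, by norm_num, fun ε h0 _ => by
        simp only [sub_self, norm_zero]; positivity⟩
  -- apply GInfty and derive the contradiction
  obtain ⟨N₀, hR⟩ := hGI x hxrep
  obtain ⟨ε₀', h₀'0, h₀'1, hE⟩ := hR (nn (N₀+1)) 0
  obtain ⟨j, hj⟩ := exists_pow_lt_of_lt_one h₀'0 (show (1:ℝ)/2 < 1 by norm_num)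
  set k : ℕ := Nat.pair (N₀+1) j with hkdef
  have hkj : j ≤ k := Nat.right_le_pair _ _
  set ε : ℝ := ee k with hεdef
  have hε0 : 0 < ε := hee0 k
  have hεsm : ε ≤ (1/2)^(k+2) := heele k
  have hεε₀' : ε ≤ ε₀' := by
    calc ε ≤ (1/2)^(k+2) := hεsm
      _ ≤ (1/2)^j := pow_le_pow_of_le_one (by norm_num) (by norm_num) (by omega)
      _ ≤ ε₀' := hj.le
  have hε14 : ε ≤ 1/4 := by
    calc ε ≤ (1/2)^(k+2) := hεsm
      _ ≤ (1/2)^2 := pow_le_pow_of_le_one (by norm_num) (by norm_num) (by omega)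
      _ = 1/4 := by norm_num
  have hup := hE ε hε0 hεε₀'
  have hxε : x ε = bp k := by rw [hεdef]; exact hxee k
  simp only [hxε] at hup
  have hlow := (hbp k).2
  rw [show (Nat.unpair k).1 = N₀ + 1 by rw [hkdef, Nat.unpair_pair]] at hlow
  -- arithmetic contradiction
  rw [← hεdef] at hlow
  have e1 : ε ^ (-((N₀+1 : ℕ) : ℝ)) = (ε ^ (N₀+1))⁻¹ := rpow_neg_nat hε0 _
  have e2 : ε ^ (-(N₀ : ℝ)) = (ε ^ N₀)⁻¹ := rpow_neg_nat hε0 _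
  have e3 : ε ^ ((0 : ℕ) : ℝ) = 1 := by
    rw [rpow_nat hε0, pow_zero]
  rw [e1] at hlow
  rw [e2, e3] at hup
  have hA1 : 1 ≤ (ε ^ N₀)⁻¹ := by
    rw [le_inv_comm₀ one_pos (pow_pos hε0 _)]
    simpa using pow_le_one₀ hε0.le (by linarith)
  have hB4 : 4 ≤ ε⁻¹ := by
    rw [le_inv_comm₀ (by norm_num) hε0]; linarith
  have hsplit : (ε ^ (N₀+1))⁻¹ = (ε ^ N₀)⁻¹ * ε⁻¹ := by
    rw [pow_succ, mul_inv]
  rw [hsplit] at hlow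
  nlinarith [hup, hlow, hA1, hB4, norm_nonneg (iteratedFDeriv ℝ (nn (N₀+1)) (u ε) (bp k))]

end GIaux

/-- Proposition 3.16: characterization of `G̃^∞(A)` for internal sharply bounded `A`. -/
theorem GInfty_internal_sharplyBounded (d : ℕ)
    (A : Set (ℝ → EuclideanSpace ℝ (Fin d)))
    (Aε : ℝ → Set (EuclideanSpace ℝ (Fin d)))
    (hA : A = InternalSet Aε) (hne : A.Nonempty)
    (hbdA : SharplyBddSet A) (hbd : SharplyBddRep Aε)
    (u : ℝ → EuclideanSpace ℝ (Fin d) → ℂ) (hu : EMod A u) :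
    GInfty A u ↔ ∃ N : ℕ, ∀ n : ℕ, EvSmall fun ε =>
      ∀ x ∈ Aε ε, ‖iteratedFDeriv ℝ n (u ε) x‖ ≤ ε ^ (-(N : ℝ)) := by
  constructor
  · exact fun h => GIaux.mp_dir d A Aε hA hne hbd u h
  · rintro ⟨N, hN⟩
    exact GIaux.mpr_dir d A Aε hA u hu N hN

end
end
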